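/- Let G be a torsion group, and let A and B be subgroups of G such that the order of every element of A is relatively prime to the order of every element of B. If [A,B] ≤ C_B(A), then [A,B] = 1. -/

import Mathlib

/-- Lemma 6.3. Let `G` be a torsion group and `A`, `B` subgroups of `G`
such that the order of every element of `A` is relatively prime to the order of every
element of `B`.  If `[A, B] ≤ C_B(A)` then `[A, B] = 1`. -/
theorem commutator_eq_bot_of_coprime_orders
    {G : Type*} [Group G] (htor : ∀ g : G, IsOfFinOrder g)
    (A B : Subgroup G)
    (hco : ∀ a ∈ A, ∀ b ∈ B, Nat.Coprime (orderOf a) (orderOf b))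
    (hAB : ⁅A, B⁆ ≤ Subgroup.centralizer (A : Set G) ⊓ B) :
    ⁅A, B⁆ = ⊥ := by
  rw [eq_bot_iff, Subgroup.commutator_le]
  intro a ha b hb
  obtain ⟨hcC, hcB⟩ := hAB (Subgroup.commutator_mem_commutator ha hb)
  open scoped commutatorElement in set c := ⁅a, b⁆ with hcdef
  have hac : a * c = c * a := hcC a ha
  have hcomm : Commute a⁻¹ c := Commute.inv_left hac
  set n := orderOf a with hn
  have key : (a⁻¹ * c) ^ n = c ^ n := by
    rw [hcomm.mul_pow, inv_pow, pow_orderOf_eq_one, inv_one, one_mul]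
  have key2 : a⁻¹ * c = b * a⁻¹ * b⁻¹ := by
    have : c = a * b * a⁻¹ * b⁻¹ := commutatorElement_def a b
    rw [this]; group
  have hcn : c ^ n = 1 := by
    rw [← key, key2]
    have : (b * a⁻¹ * b⁻¹) ^ n = b * (a⁻¹) ^ n * b⁻¹ := by
      rw [conj_pow]
    rw [this, inv_pow, pow_orderOf_eq_one, inv_one, mul_one, mul_inv_cancel]
  have hco' : Nat.Coprime (orderOf c) n := (hco a ha c hcB).symm
  have : orderOf c = 1 := hco'.eq_one_of_dvd (orderOf_dvd_of_pow_eq_one hcn)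
  simpa [Subgroup.mem_bot] using orderOf_eq_one_iff.mp this
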